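/- arXiv:1902.00503 — 2 statements merged into one kernel-verified Lean document; each statement's English description precedes it below -/
import Mathlib

section
/- For each m ≥ 5, setting p = P_m + P_{m−1}, the maximum length of a factor of x_3 having period p is P_{m+1} + P_m + P_{m−1} − 2. That is, there exists a position i such that x_3[i+j] = x_3[i+j+p] for all 0 ≤ j < P_{m+1} − 2, and there is no position i such that x_3[i+j] = x_3[i+j+p] for all 0 ≤ j < P_{m+1} − 1. Consequently x_3 contains, for every m ≥ 5, a factor of exponent exactly (P_{m+1} + P_m + P_{m−1} − 2)/(P_m + P_{m−1}) = 2 + (P_m − 2)/(P_m + P_{m−1}). -/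
/-- The Pell numbers: `P 0 = 0`, `P 1 = 1`, `P (n+2) = 2 * P (n+1) + P n`. -/
def pell : ℕ → ℕ
  | 0 => 0
  | 1 => 1
  | n + 2 => 2 * pell (n + 1) + pell n

/-- The characteristic Sturmian word with slope `α = √2 - 1`, indexed from 1:
`c_α[n] = ⌊α(n+1)⌋ - ⌊αn⌋`. -/
noncomputable def calpha (n : ℕ) : ℤ :=
  ⌊(Real.sqrt 2 - 1) * ((n : ℝ) + 1)⌋ - ⌊(Real.sqrt 2 - 1) * (n : ℝ)⌋

/-- `zcount m` = number of indices `1 ≤ j ≤ m` with `c_α[j] = 0`. -/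
noncomputable def zcount (m : ℕ) : ℕ :=
  ((Finset.Icc 1 m).filter fun j => calpha j = 0).card

/-- `ocount m` = number of indices `1 ≤ j ≤ m` with `c_α[j] = 1`. -/
noncomputable def ocount (m : ℕ) : ℕ :=
  ((Finset.Icc 1 m).filter fun j => calpha j = 1).card

/-- The infinite balanced word `x₃` over `{0,1,2}`, indexed from 0, obtained from
`c_α` by replacing the 0's by `(01)^ω` and the 1's by `2^ω`. -/
noncomputable def x3 (i : ℕ) : ℕ :=
  if calpha (i + 1) = 0 then [0, 1].getD ((zcount (i + 1) - 1) % 2) 0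
  else 2

-- Auxiliary definitions and lemmas

noncomputable def sfl (n : ℕ) : ℤ := ⌊Real.sqrt 2 * (n : ℝ)⌋

lemma sqrt2_lb : (1.414 : ℝ) < Real.sqrt 2 := by
  have h : (Real.sqrt 2)^2 = 2 := Real.sq_sqrt (by norm_num)
  nlinarith [Real.sqrt_nonneg 2]

lemma sqrt2_ub : Real.sqrt 2 < 1.4143 := by
  have h : (Real.sqrt 2)^2 = 2 := Real.sq_sqrt (by norm_num)
  nlinarith [Real.sqrt_nonneg 2]

lemma pell_one_le : ∀ n, 1 ≤ pell (n+1) := by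
  intro n
  induction n with
  | zero => simp [pell]
  | succ k ih => show 1 ≤ pell (k+2); rw [pell]; omega

lemma pell_lt_succ (n : ℕ) : pell (n+1) < pell (n+2) := by
  have := pell_one_le n
  rw [pell]; omega

lemma pell_two_le (n : ℕ) : 2 ≤ pell (n+2) := by
  have := pell_one_le n
  rw [pell]; omega

lemma pell_sq (n : ℕ) : ((pell (n+1) : ℤ) + pell n)^2 - 2 * (pell (n+1):ℤ)^2 = (-1)^(n+1) := by
  induction n with
  | zero => simp [pell]
  | succ k ih =>
    have h : pell (k+2) = 2 * pell (k+1) + pell k := rfl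
    rw [h]
    push_cast
    push_cast [h] at ih
    linear_combination (-1 : ℤ) * ih

lemma pell_det (n : ℕ) : (pell (n+1):ℤ) * (pell (n+2) + pell (n+1)) - pell (n+2) * (pell (n+1) + pell n) = (-1)^n := by
  induction n with
  | zero => simp [pell]
  | succ k ih =>
    have h : pell (k+3) = 2 * pell (k+2) + pell (k+1) := rfl
    have h2 : pell (k+2) = 2 * pell (k+1) + pell k := rfl
    rw [h, h2]
    push_cast
    push_cast [h2] at ih
    linear_combination (-1 : ℤ) * ih

lemma pow_one_add (n : ℕ) : (1 + Real.sqrt 2)^(n+1) = ((pell (n+1) : ℝ) + pell n) + Real.sqrt 2 * pell (n+1) := by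
  have hs : Real.sqrt 2 * Real.sqrt 2 = 2 := Real.mul_self_sqrt (by norm_num)
  induction n with
  | zero => norm_num [pell]
  | succ k ih =>
    have h2 : pell (k+2) = 2 * pell (k+1) + pell k := rfl
    rw [pow_succ, ih, h2]
    push_cast
    linear_combination ((pell (k+1) : ℝ)) * hs

lemma pell_sq_real (n : ℕ) : ((pell (n+1) : ℝ) + pell n)^2 - 2 * (pell (n+1):ℝ)^2 = (-1)^(n+1) := by
  have := pell_sq n
  have h2 : (((pell (n+1) : ℤ) + pell n)^2 - 2 * (pell (n+1):ℤ)^2 : ℝ) = ((-1:ℤ)^(n+1) : ℝ) := by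
    exact_mod_cast congrArg (Int.cast : ℤ → ℝ) this
  push_cast at h2
  linarith [h2]

lemma Hsub (n : ℕ) : ((pell (n+1):ℝ) + pell n) - Real.sqrt 2 * pell (n+1)
    = (-1)^(n+1) * (Real.sqrt 2 - 1)^(n+1) := by
  have hs : Real.sqrt 2 * Real.sqrt 2 = 2 := Real.mul_self_sqrt (by norm_num)
  have hu : (0:ℝ) < (1 + Real.sqrt 2)^(n+1) := by positivity
  have hinv : (Real.sqrt 2 - 1)^(n+1) * (1 + Real.sqrt 2)^(n+1) = 1 := by
    rw [← mul_pow]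
    have : (Real.sqrt 2 - 1) * (1 + Real.sqrt 2) = 1 := by linear_combination hs
    rw [this, one_pow]
  have key : (((pell (n+1):ℝ) + pell n) - Real.sqrt 2 * pell (n+1)) * (1 + Real.sqrt 2)^(n+1)
      = (-1)^(n+1) := by
    rw [pow_one_add]
    have := pell_sq_real n
    linear_combination this - ((pell (n+1):ℝ))^2 * hs
  have key2 : ((-1:ℝ))^(n+1) * (Real.sqrt 2 - 1)^(n+1) * (1 + Real.sqrt 2)^(n+1) = (-1)^(n+1) := by
    rw [mul_assoc, hinv, mul_one]
  have := mul_right_cancel₀ (ne_of_gt hu) (key.trans key2.symm)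
  exact this
lemma sqrt2H (n : ℕ) : Real.sqrt 2 * ((pell (n+1):ℝ) + pell n) - 2 * pell (n+1)
    = (-1)^(n+1) * Real.sqrt 2 * (Real.sqrt 2 - 1)^(n+1) := by
  have hs : Real.sqrt 2 * Real.sqrt 2 = 2 := Real.mul_self_sqrt (by norm_num)
  have h := Hsub n
  calc Real.sqrt 2 * ((pell (n+1):ℝ) + pell n) - 2 * pell (n+1)
      = Real.sqrt 2 * (((pell (n+1):ℝ) + pell n) - Real.sqrt 2 * pell (n+1)) := by
        linear_combination ((pell (n+1):ℝ)) * hs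
    _ = (-1)^(n+1) * Real.sqrt 2 * (Real.sqrt 2 - 1)^(n+1) := by rw [h]; ring

/-- `Bad` positions for the parameter `j` (the paper's `m` is `j+1`). -/
def BadM (j n : ℕ) : Prop :=
  ∃ k : ℤ, 0 < (-1:ℝ)^j * (Real.sqrt 2 * n - k) ∧
    (-1:ℝ)^j * (Real.sqrt 2 * n - k) < Real.sqrt 2 * (Real.sqrt 2 - 1)^(j+1)

lemma tau_cases (j : ℕ) : ((-1:ℝ)^j = 1) ∨ ((-1:ℝ)^j = -1) := by
  rcases Nat.even_or_odd j with h | h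
  · exact Or.inl (h.neg_one_pow)
  · exact Or.inr (h.neg_one_pow)

lemma r_pos : (0:ℝ) < Real.sqrt 2 - 1 := by have := sqrt2_lb; linarith
lemma r_lt : Real.sqrt 2 - 1 < 0.4143 := by have := sqrt2_ub; linarith

lemma rpow_pos (j : ℕ) : (0:ℝ) < (Real.sqrt 2 - 1)^j := pow_pos r_pos j

lemma delta_pos (j : ℕ) : (0:ℝ) < Real.sqrt 2 * (Real.sqrt 2 - 1)^(j+1) := by
  have := rpow_pos (j+1); have := sqrt2_lb; nlinarith

lemma delta_lt_half (j : ℕ) : Real.sqrt 2 * (Real.sqrt 2 - 1)^(j+1) < 0.6 := by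
  have h1 : (Real.sqrt 2 - 1)^(j+1) ≤ (Real.sqrt 2 - 1)^1 := by
    apply pow_le_pow_of_le_one (le_of_lt r_pos) (by have := r_lt; linarith) (by omega)
  have h2 := rpow_pos (j+1)
  have := sqrt2_ub; have := sqrt2_lb
  nlinarith

lemma delta_small (j : ℕ) (hj : 4 ≤ j) : Real.sqrt 2 * (Real.sqrt 2 - 1)^(j+1) < 0.02 := by
  have h1 : (Real.sqrt 2 - 1)^(j+1) ≤ (Real.sqrt 2 - 1)^5 := by
    apply pow_le_pow_of_le_one (le_of_lt r_pos) (by have := r_lt; linarith) (by omega)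
  have h5 : (Real.sqrt 2 - 1)^5 ≤ (0.4143:ℝ)^5 := by
    apply pow_le_pow_left₀ (le_of_lt r_pos) (le_of_lt r_lt)
  have h2 := rpow_pos (j+1)
  have := sqrt2_ub; have := sqrt2_lb
  nlinarith [pow_pos r_pos 5]

lemma sqrt2_nat_ne_int (n : ℕ) (hn : 1 ≤ n) (k : ℤ) : Real.sqrt 2 * (n:ℝ) ≠ (k:ℝ) := by
  intro h
  have hirr : Irrational (Real.sqrt 2 * (n:ℝ)) := by
    have : ((n:ℚ):ℝ) = (n:ℝ) := by push_cast; rfl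
    rw [← this]
    exact (irrational_sqrt_two.mul_ratCast (by exact_mod_cast Nat.one_le_iff_ne_zero.mp hn))
  exact hirr ⟨(k:ℚ), by push_cast; exact h.symm⟩

lemma sfl_fract_pos (n : ℕ) (hn : 1 ≤ n) : 0 < Real.sqrt 2 * (n:ℝ) - (sfl n : ℝ) := by
  have h1 : (sfl n : ℝ) ≤ Real.sqrt 2 * n := Int.floor_le _
  rcases lt_or_eq_of_le h1 with h | h
  · linarith
  · exact absurd h.symm (sqrt2_nat_ne_int n hn _)

lemma sfl_lt (n : ℕ) : Real.sqrt 2 * (n:ℝ) < (sfl n : ℝ) + 1 := Int.lt_floor_add_one _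
lemma hsplit (j n : ℕ) : Real.sqrt 2 * ((n + (pell (j+1) + pell j) : ℕ) : ℝ)
    = Real.sqrt 2 * (n:ℝ) + 2*(pell (j+1):ℝ)
      + (-1:ℝ)^(j+1) * (Real.sqrt 2 * (Real.sqrt 2 - 1)^(j+1)) := by
  have h := sqrt2H j
  push_cast
  linear_combination h

lemma shift_good (j n : ℕ) (hn : 1 ≤ n) (h : ¬ BadM j n) :
    sfl (n + (pell (j+1) + pell j)) = sfl n + 2 * pell (j+1) := by
  have hδpos := delta_pos j
  have hδlt := delta_lt_half j
  set δ : ℝ := Real.sqrt 2 * (Real.sqrt 2 - 1)^(j+1) with hδ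
  set x : ℝ := Real.sqrt 2 * (n:ℝ) with hx
  have hfl : Real.sqrt 2 * ((n + (pell (j+1) + pell j) : ℕ) : ℝ)
      = x + 2*(pell (j+1):ℝ) + (-1:ℝ)^(j+1) * δ := hsplit j n
  have hxlb : (sfl n : ℝ) ≤ x := Int.floor_le _
  have hxub : x < (sfl n : ℝ) + 1 := Int.lt_floor_add_one _
  have hxpos : 0 < x - (sfl n : ℝ) := sfl_fract_pos n hn
  rcases Nat.even_or_odd j with hpar | hpar
  · -- τ = 1, (-1)^(j+1) = -1
    have ht : ((-1:ℝ))^j = 1 := hpar.neg_one_pow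
    have ht1 : ((-1:ℝ))^(j+1) = -1 := by rw [pow_succ, ht]; ring
    have hF : δ ≤ x - (sfl n : ℝ) := by
      by_contra hlt
      push_neg at hlt
      exact h ⟨sfl n, by rw [ht]; constructor <;> [simpa using hxpos; simpa using hlt]⟩
    show (⌊Real.sqrt 2 * ((n + (pell (j+1) + pell j) : ℕ) : ℝ)⌋ : ℤ) = sfl n + 2 * pell (j+1)
    rw [hfl, ht1, Int.floor_eq_iff]
    constructor
    · push_cast; linarith
    · push_cast; linarith
  · -- τ = -1, (-1)^(j+1) = 1
    have ht : ((-1:ℝ))^j = -1 := hpar.neg_one_pow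
    have ht1 : ((-1:ℝ))^(j+1) = 1 := by rw [pow_succ, ht]; ring
    have hF : δ ≤ (sfl n : ℝ) + 1 - x := by
      by_contra hlt
      push_neg at hlt
      refine h ⟨sfl n + 1, ?_⟩
      rw [ht]
      constructor
      · push_cast; linarith
      · push_cast; linarith
    have hne : x + δ ≠ (sfl n : ℝ) + 1 := by
      intro heq
      apply sqrt2_nat_ne_int (n + (pell (j+1) + pell j)) (by omega)
        (sfl n + 1 + 2 * pell (j+1))
      rw [hfl, ht1]
      push_cast
      linarith
    have hFs : δ < (sfl n : ℝ) + 1 - x := lt_of_le_of_ne hF (by intro he; exact hne (by linarith))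
    show (⌊Real.sqrt 2 * ((n + (pell (j+1) + pell j) : ℕ) : ℝ)⌋ : ℤ) = sfl n + 2 * pell (j+1)
    rw [hfl, ht1, Int.floor_eq_iff]
    constructor
    · push_cast; linarith
    · push_cast; linarith

lemma shift_bad (j n : ℕ) (h : BadM j n) :
    sfl (n + (pell (j+1) + pell j)) = sfl n + 2 * pell (j+1) - (-1:ℤ)^j := by
  have hδpos := delta_pos j
  have hδlt := delta_lt_half j
  set δ : ℝ := Real.sqrt 2 * (Real.sqrt 2 - 1)^(j+1) with hδ
  set x : ℝ := Real.sqrt 2 * (n:ℝ) with hx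
  have hfl : Real.sqrt 2 * ((n + (pell (j+1) + pell j) : ℕ) : ℝ)
      = x + 2*(pell (j+1):ℝ) + (-1:ℝ)^(j+1) * δ := hsplit j n
  obtain ⟨k, hk1, hk2⟩ := h
  rcases Nat.even_or_odd j with hpar | hpar
  · -- τ = 1
    have ht : ((-1:ℝ))^j = 1 := hpar.neg_one_pow
    have hti : ((-1:ℤ))^j = 1 := hpar.neg_one_pow
    have ht1 : ((-1:ℝ))^(j+1) = -1 := by rw [pow_succ, ht]; ring
    rw [ht, one_mul] at hk1 hk2
    have hflr : sfl n = k := by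
      show (⌊x⌋ : ℤ) = k
      rw [Int.floor_eq_iff]
      constructor <;> linarith
    show (⌊Real.sqrt 2 * ((n + (pell (j+1) + pell j) : ℕ) : ℝ)⌋ : ℤ)
        = sfl n + 2 * pell (j+1) - (-1:ℤ)^j
    rw [hfl, ht1, hti, hflr, Int.floor_eq_iff]
    constructor
    · push_cast; linarith
    · push_cast; linarith
  · -- τ = -1
    have ht : ((-1:ℝ))^j = -1 := hpar.neg_one_pow
    have hti : ((-1:ℤ))^j = -1 := hpar.neg_one_pow
    have ht1 : ((-1:ℝ))^(j+1) = 1 := by rw [pow_succ, ht]; ring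
    rw [ht] at hk1 hk2
    have hk1' : 0 < (k:ℝ) - x := by linarith
    have hk2' : (k:ℝ) - x < δ := by linarith
    have hflr : sfl n = k - 1 := by
      show (⌊x⌋ : ℤ) = k - 1
      rw [Int.floor_eq_iff]
      constructor
      · push_cast; linarith
      · push_cast; linarith
    show (⌊Real.sqrt 2 * ((n + (pell (j+1) + pell j) : ℕ) : ℝ)⌋ : ℤ)
        = sfl n + 2 * pell (j+1) - (-1:ℤ)^j
    rw [hfl, ht1, hti, hflr, Int.floor_eq_iff]
    constructor
    · push_cast; linarith
    · push_cast; linarith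
lemma tauE1 (j : ℕ) : (-1:ℝ)^j * (Real.sqrt 2 * (pell (j+1):ℝ) - ((pell (j+1):ℝ) + (pell j:ℝ)))
    = (Real.sqrt 2 - 1)^(j+1) := by
  have h := Hsub j
  rw [pow_succ] at h
  rcases tau_cases j with ht | ht <;> rw [ht] at h ⊢ <;> linarith

lemma tauE2 (j : ℕ) : (-1:ℝ)^j * (Real.sqrt 2 * (pell (j+2):ℝ) - ((pell (j+2):ℝ) + (pell (j+1):ℝ)))
    = -(Real.sqrt 2 - 1)^(j+2) := by
  have h := Hsub (j+1)
  have e : j+1+1 = j+2 := rfl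
  rw [e] at h
  rw [pow_succ, pow_succ] at h
  rcases tau_cases j with ht | ht <;> rw [ht] at h ⊢ <;> · rw [pow_succ]; rw [pow_succ] at h; linarith

lemma delta_split (j : ℕ) : Real.sqrt 2 * (Real.sqrt 2 - 1)^(j+1)
    = (Real.sqrt 2 - 1)^(j+1) + (Real.sqrt 2 - 1)^(j+2) := by
  rw [pow_succ (Real.sqrt 2 - 1) (j+1)]
  ring

lemma bad_pell (j : ℕ) : BadM j (pell (j+1)) := by
  refine ⟨(pell (j+1) : ℤ) + (pell j : ℤ), ?_, ?_⟩
  · have := tauE1 j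
    push_cast
    rw [show (-1:ℝ)^j * (Real.sqrt 2 * (pell (j+1):ℝ) - ((pell (j+1):ℝ) + (pell j:ℝ)))
        = (Real.sqrt 2 - 1)^(j+1) from this]
    exact rpow_pos (j+1)
  · have := tauE1 j
    push_cast
    rw [show (-1:ℝ)^j * (Real.sqrt 2 * (pell (j+1):ℝ) - ((pell (j+1):ℝ) + (pell j:ℝ)))
        = (Real.sqrt 2 - 1)^(j+1) from this]
    nlinarith [rpow_pos (j+1), sqrt2_lb]

lemma bad_step (j n : ℕ) (h : BadM j n) :
    BadM j (n + pell (j+1)) ∨ BadM j (n + pell (j+2)) := by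
  obtain ⟨k, hk1, hk2⟩ := h
  have hE1 := tauE1 j
  have hE2 := tauE2 j
  have hr2 := rpow_pos (j+2)
  have hr1 := rpow_pos (j+1)
  have hds := delta_split j
  rcases lt_trichotomy ((-1:ℝ)^j * (Real.sqrt 2 * (n:ℝ) - (k:ℝ))) ((Real.sqrt 2 - 1)^(j+2))
    with hc | hc | hc
  · left
    refine ⟨k + ((pell (j+1):ℤ) + (pell j:ℤ)), ?_, ?_⟩ <;>
    · push_cast
      rw [show Real.sqrt 2 * ((n:ℝ) + (pell (j+1):ℝ)) - ((k:ℝ) + ((pell (j+1):ℝ) + (pell j:ℝ)))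
          = (Real.sqrt 2 * (n:ℝ) - (k:ℝ))
            + (Real.sqrt 2 * (pell (j+1):ℝ) - ((pell (j+1):ℝ) + (pell j:ℝ))) by ring,
        mul_add, hE1]
      linarith
  · exfalso
    have hz : (-1:ℝ)^j * (Real.sqrt 2 * ((n + pell (j+2) : ℕ):ℝ)
        - ((k:ℝ) + ((pell (j+2):ℝ) + (pell (j+1):ℝ)))) = 0 := by
      push_cast
      rw [show Real.sqrt 2 * ((n:ℝ) + (pell (j+2):ℝ)) - ((k:ℝ) + ((pell (j+2):ℝ) + (pell (j+1):ℝ)))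
          = (Real.sqrt 2 * (n:ℝ) - (k:ℝ))
            + (Real.sqrt 2 * (pell (j+2):ℝ) - ((pell (j+2):ℝ) + (pell (j+1):ℝ))) by ring,
        mul_add, hE2]
      linarith
    have hne := sqrt2_nat_ne_int (n + pell (j+2)) (by have := pell_two_le j; omega)
      (k + ((pell (j+2):ℤ) + (pell (j+1):ℤ)))
    rcases tau_cases j with ht | ht <;> rw [ht] at hz
    · rw [one_mul] at hz
      apply hne; push_cast at hz ⊢; linarith
    · rw [neg_one_mul, neg_eq_zero] at hz
      apply hne; push_cast at hz ⊢; linarith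
  · right
    refine ⟨k + ((pell (j+2):ℤ) + (pell (j+1):ℤ)), ?_, ?_⟩ <;>
    · push_cast
      rw [show Real.sqrt 2 * ((n:ℝ) + (pell (j+2):ℝ)) - ((k:ℝ) + ((pell (j+2):ℝ) + (pell (j+1):ℝ)))
          = (Real.sqrt 2 * (n:ℝ) - (k:ℝ))
            + (Real.sqrt 2 * (pell (j+2):ℝ) - ((pell (j+2):ℝ) + (pell (j+1):ℝ))) by ring,
        mul_add, hE2]
      linarith
lemma coeffs (j : ℕ) (n k : ℤ) : ∃ a b : ℤ,
    a * (pell (j+1):ℤ) + b * (pell (j+2):ℤ) = n ∧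
    a * ((pell (j+1):ℤ) + (pell j:ℤ)) + b * ((pell (j+2):ℤ) + (pell (j+1):ℤ)) = k := by
  have hd2 : ((-1:ℤ)^j) * ((-1:ℤ)^j) = 1 := by
    rcases Nat.even_or_odd j with hp | hp <;> rw [hp.neg_one_pow] <;> ring
  have hdet := pell_det j
  refine ⟨(-1:ℤ)^j * (((pell (j+2):ℤ) + (pell (j+1):ℤ)) * n - (pell (j+2):ℤ) * k),
    (-1:ℤ)^j * ((pell (j+1):ℤ) * k - ((pell (j+1):ℤ) + (pell j:ℤ)) * n), ?_, ?_⟩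
  · linear_combination ((-1:ℤ)^j * n) * hdet + n * hd2
  · linear_combination ((-1:ℤ)^j * k) * hdet + k * hd2

lemma bad_small (j n : ℕ) (hn : 1 ≤ n) (hlt : n < pell (j+1) + pell (j+2))
    (h : BadM j n) : n = pell (j+1) := by
  obtain ⟨k, hk1, hk2⟩ := h
  obtain ⟨a, b, hn1, hk1'⟩ := coeffs j (n:ℤ) k
  have hE1 := tauE1 j
  have hE2 := tauE2 j
  have hr1 := rpow_pos (j+1)
  have hr2 := rpow_pos (j+2)
  have hds := delta_split j
  have hre : Real.sqrt 2 * (n:ℝ) - (k:ℝ)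
      = (a:ℝ) * (Real.sqrt 2 * (pell (j+1):ℝ) - ((pell (j+1):ℝ) + (pell j:ℝ)))
        + (b:ℝ) * (Real.sqrt 2 * (pell (j+2):ℝ) - ((pell (j+2):ℝ) + (pell (j+1):ℝ))) := by
    have e1 : (a:ℝ) * (pell (j+1):ℝ) + (b:ℝ) * (pell (j+2):ℝ) = (n:ℝ) := by
      exact_mod_cast congrArg (Int.cast : ℤ → ℝ) hn1
    have e2 : (a:ℝ) * ((pell (j+1):ℝ) + (pell j:ℝ))
        + (b:ℝ) * ((pell (j+2):ℝ) + (pell (j+1):ℝ)) = (k:ℝ) := by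
      exact_mod_cast congrArg (Int.cast : ℤ → ℝ) hk1'
    linear_combination e2 - Real.sqrt 2 * e1
  have hθ : (-1:ℝ)^j * (Real.sqrt 2 * (n:ℝ) - (k:ℝ))
      = (a:ℝ) * (Real.sqrt 2 - 1)^(j+1) - (b:ℝ) * (Real.sqrt 2 - 1)^(j+2) := by
    rw [hre, mul_add,
      show (-1:ℝ)^j * ((a:ℝ) * (Real.sqrt 2 * (pell (j+1):ℝ) - ((pell (j+1):ℝ) + (pell j:ℝ))))
        = (a:ℝ) * ((-1:ℝ)^j * (Real.sqrt 2 * (pell (j+1):ℝ) - ((pell (j+1):ℝ) + (pell j:ℝ)))) from by ring,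
      hE1,
      show (-1:ℝ)^j * ((b:ℝ) * (Real.sqrt 2 * (pell (j+2):ℝ) - ((pell (j+2):ℝ) + (pell (j+1):ℝ))))
        = (b:ℝ) * ((-1:ℝ)^j * (Real.sqrt 2 * (pell (j+2):ℝ) - ((pell (j+2):ℝ) + (pell (j+1):ℝ)))) from by ring,
      hE2]
    ring
  rw [hθ] at hk1 hk2
  rw [hds] at hk2
  have hPpos : 1 ≤ pell (j+1) := pell_one_le j
  have hP'pos : 1 ≤ pell (j+2) := pell_one_le (j+1)
  rcases lt_trichotomy b 0 with hbneg | hbzero | hbpos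
  · exfalso
    have hb1 : b ≤ -1 := by omega
    have hBr : (b:ℝ) ≤ -1 := by exact_mod_cast hb1
    rcases le_or_gt a 0 with haneg | hapos
    · have hAz : (a:ℤ) ≤ 0 := haneg
      have : (n:ℤ) ≤ -(pell (j+2):ℤ) := by
        rw [← hn1]
        have h1 : (0:ℤ) ≤ (pell (j+1):ℤ) := by positivity
        nlinarith
      have hn0 : (1:ℤ) ≤ (n:ℤ) := by exact_mod_cast hn
      have : (0:ℤ) < (pell (j+2):ℤ) := by exact_mod_cast hP'pos
      omega
    · have hAr : (1:ℝ) ≤ (a:ℝ) := by exact_mod_cast hapos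
      nlinarith
  · rw [hbzero] at hn1
    push_cast [hbzero] at hk1 hk2
    have hmul : (Real.sqrt 2 - 1)^(j+2) = (Real.sqrt 2 - 1)^(j+1) * (Real.sqrt 2 - 1) :=
      pow_succ _ _
    have hub := sqrt2_ub
    have ha0 : (0:ℝ) < (a:ℝ) := by nlinarith
    have ha2 : (a:ℝ) < 2 := by nlinarith
    have ha1 : a = 1 := by
      have h1 : (0:ℤ) < a := by exact_mod_cast ha0
      have h2 : a < 2 := by exact_mod_cast ha2
      omega
    rw [ha1] at hn1
    simp at hn1
    exact_mod_cast hn1.symm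
  · exfalso
    have hBr : (1:ℝ) ≤ (b:ℝ) := by exact_mod_cast hbpos
    have ha1 : (1:ℤ) ≤ a := by
      by_contra hc
      push_neg at hc
      have hAr : (a:ℝ) ≤ 0 := by exact_mod_cast (by omega : a ≤ 0)
      nlinarith
    have hge : (pell (j+1) : ℤ) + (pell (j+2) : ℤ) ≤ (n:ℤ) := by
      rw [← hn1]
      have hAr : (1:ℤ) ≤ a := ha1
      have h1 : (1:ℤ) ≤ (pell (j+1):ℤ) := by exact_mod_cast hPpos
      have h2 : (1:ℤ) ≤ (pell (j+2):ℤ) := by exact_mod_cast hP'pos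
      nlinarith
    have hlt' : (n:ℤ) < (pell (j+1) : ℤ) + (pell (j+2) : ℤ) := by exact_mod_cast hlt
    omega
lemma bad_window (j : ℕ) : ∀ N : ℕ, 1 ≤ N → ∃ n, BadM j n ∧ N ≤ n ∧ n < N + pell (j+2) := by
  intro N
  induction N using Nat.strong_induction_on with
  | _ N ih =>
    intro hN
    have h1 := pell_lt_succ j
    have h2 := pell_one_le j
    have h2' := pell_one_le (j+1)
    rcases le_or_gt N (pell (j+1)) with hle | hgt
    · exact ⟨pell (j+1), bad_pell j, hle, by omega⟩
    · have hN1 : 1 ≤ N - 1 := by omega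
      obtain ⟨n, hbad, hn1, hn2⟩ := ih (N-1) (by omega) hN1
      rcases le_or_gt N n with hNn | hNn
      · exact ⟨n, hbad, hNn, by omega⟩
      · have hn' : n = N - 1 := by omega
        rcases bad_step j n hbad with hb | hb
        · exact ⟨n + pell (j+1), hb, by omega, by omega⟩
        · exact ⟨n + pell (j+2), hb, by omega, by omega⟩

lemma bad_isolated (j n : ℕ) (hj : 4 ≤ j) (h1 : BadM j n) (h2 : BadM j (n+1)) : False := by
  obtain ⟨k1, ha1, ha2⟩ := h1
  obtain ⟨k2, hb1, hb2⟩ := h2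
  have hsmall := delta_small j hj
  have hlb := sqrt2_lb
  have hub := sqrt2_ub
  have hcast : ((n:ℕ)+1 : ℕ) = ((n:ℝ) + 1 : ℝ) := by push_cast; ring
  have hd : (-1:ℝ)^j * (Real.sqrt 2 * ((n+1:ℕ):ℝ) - k2) - (-1:ℝ)^j * (Real.sqrt 2 * (n:ℝ) - k1)
      = (-1:ℝ)^j * (Real.sqrt 2 - ((k2:ℝ) - (k1:ℝ))) := by push_cast; ring
  have hc1 : (1:ℝ) < (k2:ℝ) - (k1:ℝ) := by
    rcases tau_cases j with ht | ht <;> rw [ht] at hd ha1 ha2 hb1 hb2 <;> nlinarith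
  have hc2 : ((k2:ℝ) - (k1:ℝ)) < 2 := by
    rcases tau_cases j with ht | ht <;> rw [ht] at hd ha1 ha2 hb1 hb2 <;> nlinarith
  have : (1:ℤ) < k2 - k1 := by exact_mod_cast hc1
  have : (k2 - k1 : ℤ) < 2 := by exact_mod_cast hc2
  omega

lemma calpha_eq (n : ℕ) : calpha n = sfl (n+1) - sfl n - 1 := by
  unfold calpha sfl
  have e1 : (Real.sqrt 2 - 1) * ((n : ℝ) + 1) = Real.sqrt 2 * (((n+1 : ℕ)):ℝ) - ((n+1 : ℤ) : ℝ) := by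
    push_cast; ring
  have e2 : (Real.sqrt 2 - 1) * (n : ℝ) = Real.sqrt 2 * ((n:ℕ):ℝ) - ((n : ℤ) : ℝ) := by
    push_cast; ring
  rw [e1, e2, Int.floor_sub_intCast, Int.floor_sub_intCast]
  push_cast
  ring

lemma calpha_cases (n : ℕ) : calpha n = 0 ∨ calpha n = 1 := by
  have hr := r_pos
  have hrl : Real.sqrt 2 - 1 < 1 := by have := sqrt2_ub; linarith
  have h1 : ⌊(Real.sqrt 2 - 1) * (n : ℝ)⌋ ≤ ⌊(Real.sqrt 2 - 1) * ((n : ℝ) + 1)⌋ := by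
    apply Int.floor_le_floor
    nlinarith
  have h2 : ⌊(Real.sqrt 2 - 1) * ((n : ℝ) + 1)⌋ ≤ ⌊(Real.sqrt 2 - 1) * (n : ℝ) + 1⌋ := by
    apply Int.floor_le_floor
    nlinarith
  rw [Int.floor_add_one] at h2
  unfold calpha
  omega

lemma sfl_one : sfl 1 = 1 := by
  unfold sfl
  rw [show ((1:ℕ):ℝ) = (1:ℝ) by norm_num, mul_one]
  rw [Int.floor_eq_iff]
  constructor
  · have := sqrt2_lb; push_cast; linarith
  · have := sqrt2_ub; push_cast; linarith

lemma calpha_sum (n : ℕ) : ∑ jj ∈ Finset.Icc 1 n, calpha jj = sfl (n+1) - 1 - (n:ℤ) := by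
  have step1 : ∑ jj ∈ Finset.Icc 1 n, calpha jj = ∑ i ∈ Finset.range n, calpha (i+1) := by
    rw [← Finset.Ico_add_one_right_eq_Icc, Finset.sum_Ico_eq_sum_range]
    norm_num
    exact Finset.sum_congr rfl (fun i _ => by rw [Nat.add_comm])
  rw [step1]
  have step2 : ∑ i ∈ Finset.range n, calpha (i+1)
      = (∑ i ∈ Finset.range n, (sfl (i+1+1) - sfl (i+1))) - (∑ _i ∈ Finset.range n, (1:ℤ)) := by
    rw [← Finset.sum_sub_distrib]
    exact Finset.sum_congr rfl (fun i _ => by rw [calpha_eq])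
  rw [step2, Finset.sum_range_sub (fun i => sfl (i+1)) n]
  simp [sfl_one]

lemma zcount_eq (n : ℕ) : (zcount n : ℤ) = 2*(n:ℤ) + 1 - sfl (n+1) := by
  have hpart : zcount n + ((Finset.Icc 1 n).filter fun j => ¬ calpha j = 0).card = n := by
    unfold zcount
    rw [Finset.card_filter_add_card_filter_not]
    simp
  have hsum2 : ∑ jj ∈ Finset.Icc 1 n, calpha jj
      = ((((Finset.Icc 1 n).filter fun j => ¬ calpha j = 0).card : ℕ) : ℤ) := by
    rw [← Finset.sum_boole]
    refine Finset.sum_congr rfl (fun jj _ => ?_)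
    rcases calpha_cases jj with h | h <;> rw [h] <;> simp
  have hs := calpha_sum n
  rw [hsum2] at hs
  omega

lemma x3_eq_of_shifts (j i : ℕ)
    (h1 : sfl (i+1 + (pell (j+1) + pell j)) = sfl (i+1) + 2 * pell (j+1))
    (h2 : sfl (i+2 + (pell (j+1) + pell j)) = sfl (i+2) + 2 * pell (j+1)) :
    x3 (i + (pell (j+1) + pell j)) = x3 i := by
  set p : ℕ := pell (j+1) + pell j with hp
  have e1 : i + p + 1 = i + 1 + p := by omega
  have e2 : i + p + 2 = i + 2 + p := by omega
  have hc : calpha (i + p + 1) = calpha (i + 1) := by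
    rw [e1, calpha_eq, calpha_eq]
    rw [show i + 1 + p + 1 = i + 2 + p by omega, h2, h1]
    ring
  rcases calpha_cases (i+1) with hz | ho
  · -- zero case
    have hzc : zcount (i + p + 1) = zcount (i + 1) + 2 * pell j := by
      have q1 := zcount_eq (i + p + 1)
      have q2 := zcount_eq (i + 1)
      rw [show i + p + 1 + 1 = i + 2 + p by omega, h2] at q1
      have : (zcount (i+p+1) : ℤ) = (zcount (i+1) : ℤ) + 2 * (pell j : ℤ) := by
        rw [q1, q2]
        push_cast [hp]
        ring
      exact_mod_cast this
    have hnz : 1 ≤ zcount (i+1) := by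
      apply Finset.card_pos.mpr
      exact ⟨i+1, Finset.mem_filter.mpr ⟨Finset.mem_Icc.mpr ⟨by omega, le_refl _⟩, hz⟩⟩
    have hmod : (zcount (i + p + 1) - 1) % 2 = (zcount (i + 1) - 1) % 2 := by
      rw [hzc]; omega
    unfold x3
    rw [hc, hz, if_pos rfl, if_pos rfl, hmod]
  · unfold x3
    rw [hc, ho]
    norm_num

lemma x3_ne_of_calpha_ne (i p' : ℕ) (h : calpha (i+1) ≠ calpha (i+1+p')) :
    x3 i ≠ x3 (i + p') := by
  have e : i + p' + 1 = i + 1 + p' := by omega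
  rcases calpha_cases (i+1) with h1 | h1 <;> rcases calpha_cases (i+1+p') with h2 | h2
  · exact absurd (h1.trans h2.symm) h
  · -- x3 i ∈ {0,1}, x3 (i+p') = 2
    unfold x3
    rw [e, h1, h2, if_pos rfl, if_neg (by norm_num)]
    have : (zcount (i + 1) - 1) % 2 = 0 ∨ (zcount (i + 1) - 1) % 2 = 1 := by omega
    rcases this with hm | hm <;> rw [hm] <;> norm_num
  · unfold x3
    rw [e, h1, h2, if_pos rfl, if_neg (by norm_num)]
    have : (zcount (i + 1 + p') - 1) % 2 = 0 ∨ (zcount (i + 1 + p') - 1) % 2 = 1 := by omega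
    rcases this with hm | hm <;> rw [hm] <;> norm_num
  · exact absurd (h1.trans h2.symm) h

/-- For every `m ≥ 5`, with `p = P m + P (m-1)`, the maximal length of a factor of `x₃`
of period `p` is `P (m+1) + P m + P (m-1) - 2`; that is, there is a position `i` with
`x₃[i+j] = x₃[i+j+p]` for all `j < P (m+1) - 2`, no position `i` with
`x₃[i+j] = x₃[i+j+p]` for all `j < P (m+1) - 1`, and the resulting maximal exponent is
`(P (m+1) + P m + P (m-1) - 2) / (P m + P (m-1)) = 2 + (P m - 2) / (P m + P (m-1))`. -/
theorem x3_maximal_repetitions (m : ℕ) (hm : 5 ≤ m) :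
    (∃ i, ∀ j, j < pell (m + 1) - 2 →
      x3 (i + j) = x3 (i + j + (pell m + pell (m - 1)))) ∧
    (¬ ∃ i, ∀ j, j < pell (m + 1) - 1 →
      x3 (i + j) = x3 (i + j + (pell m + pell (m - 1)))) ∧
    ((pell (m + 1) : ℚ) + (pell m : ℚ) + (pell (m - 1) : ℚ) - 2) /
        ((pell m : ℚ) + (pell (m - 1) : ℚ)) =
      2 + ((pell m : ℚ) - 2) / ((pell m : ℚ) + (pell (m - 1) : ℚ)) := by
  obtain ⟨j, rfl⟩ : ∃ j, m = j + 1 := ⟨m - 1, by omega⟩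
  have hj : 4 ≤ j := by omega
  have e1 : j + 1 - 1 = j := by omega
  have e2 : j + 1 + 1 = j + 2 := rfl
  rw [e1, e2]
  have h2le := pell_two_le j
  have hltP := pell_lt_succ j
  have h1le := pell_one_le j
  have hdi : ((-1:ℤ)^j = 1) ∨ ((-1:ℤ)^j = -1) := by
    rcases Nat.even_or_odd j with hp | hp
    · exact Or.inl hp.neg_one_pow
    · exact Or.inr hp.neg_one_pow
  refine ⟨⟨pell (j+1), ?_⟩, ?_, ?_⟩
  · -- existence of the long factor
    intro jj hjj
    have hng : ∀ n : ℕ, pell (j+1) < n → n < pell (j+1) + pell (j+2) → ¬ BadM j n := by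
      intro n hlo hhi hb
      have := bad_small j n (by omega) hhi hb
      omega
    refine (x3_eq_of_shifts j (pell (j+1) + jj) ?_ ?_).symm
    · exact shift_good j (pell (j+1) + jj + 1) (by omega)
        (hng _ (by omega) (by omega))
    · exact shift_good j (pell (j+1) + jj + 2) (by omega)
        (hng _ (by omega) (by omega))
  · -- no longer factor
    rintro ⟨i, hi⟩
    obtain ⟨n, hbad, hn1, hn2⟩ := bad_window j (i+1) (by omega)
    rcases le_or_gt (i+2) n with hc | hc
    · -- mismatch at position n-2
      have hnb : ¬ BadM j (n-1) := fun hb =>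
        bad_isolated j (n-1) hj hb (by rwa [show n-1+1 = n by omega])
      have hgood := shift_good j (n-1) (by omega) hnb
      have hbadshift := shift_bad j n hbad
      have hcal : calpha ((n-2)+1) ≠ calpha ((n-2)+1+(pell (j+1) + pell j)) := by
        rw [show (n-2)+1 = n-1 by omega, calpha_eq, calpha_eq,
          show n-1+(pell (j+1)+pell j)+1 = n+(pell (j+1)+pell j) by omega,
          show n-1+1 = n by omega, hbadshift, hgood]
        intro heq
        rcases hdi with hd | hd <;> rw [hd] at heq <;> omega
      have heq := hi (n-2-i) (by omega)
      rw [show i + (n-2-i) = n-2 by omega] at heq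
      exact x3_ne_of_calpha_ne (n-2) _ hcal heq
    · -- n = i+1, mismatch at position i
      have hni : n = i+1 := by omega
      have hnb : ¬ BadM j (n+1) := fun hb => bad_isolated j n hj hbad hb
      have hgood := shift_good j (n+1) (by omega) hnb
      have hbadshift := shift_bad j n hbad
      have hcal : calpha (i+1) ≠ calpha (i+1+(pell (j+1) + pell j)) := by
        rw [← hni, calpha_eq, calpha_eq,
          show n+(pell (j+1)+pell j)+1 = (n+1)+(pell (j+1)+pell j) by omega,
          hbadshift, hgood]
        intro heq
        rcases hdi with hd | hd <;> rw [hd] at heq <;> omega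
      have heq := hi 0 (by omega)
      rw [add_zero] at heq
      exact x3_ne_of_calpha_ne i _ hcal heq
  · -- the exponent identity
    have hp : pell (j+2) = 2 * pell (j+1) + pell j := rfl
    have hpos : (0:ℚ) < (pell (j+1) : ℚ) + (pell j : ℚ) := by
      have h1 : (1:ℚ) ≤ (pell (j+1) : ℚ) := by exact_mod_cast h1le
      have h0 : (0:ℚ) ≤ (pell j : ℚ) := by positivity
      linarith
    rw [hp]
    push_cast
    field_simp
    ring
end

section
/- The word x_5 contains 'almost 3/2-powers' with arbitrarily large periods: for infinitely many integers p > 10 there exist a position i and a length n with n > p such that x_5[i+j] = x_5[i+j+p] for all 0 ≤ j < n − p and 2n + 4 ≥ 3p. In particular there are factors of x_5 with period p arbitrarily large whose exponent n/p is at least 3/2 − 2/p, so the exponents of these factors tend to the critical exponent 3/2. -/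
/-- The infinite balanced word `x₅` over `{0,1,2,3,4}`, indexed from 0, obtained from
`c_α` by replacing the 0's by `(0102)^ω` and the 1's by `(34)^ω`. -/
noncomputable def x5 (i : ℕ) : ℕ :=
  if calpha (i + 1) = 0 then [0, 1, 0, 2].getD ((zcount (i + 1) - 1) % 4) 0
  else [3, 4].getD ((ocount (i + 1) - 1) % 2) 0


def pp : ℕ → ℕ × ℕ
  | 0 => (1, 1)
  | n+1 => ((pp n).1 + (pp n).2, 2 * (pp n).1 + (pp n).2)

def pa (n : ℕ) : ℕ := (pp n).1
def pH (n : ℕ) : ℕ := (pp n).2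
lemma pa_succ (n : ℕ) : pa (n+1) = pa n + pH n := rfl
lemma pH_succ (n : ℕ) : pH (n+1) = 2 * pa n + pH n := rfl
lemma pa_zero : pa 0 = 1 := rfl
lemma pH_zero : pH 0 = 1 := rfl
lemma pa_pos (n : ℕ) : 1 ≤ pa n := by
  induction n with
  | zero => simp [pa_zero]
  | succ k ih => rw [pa_succ]; omega
lemma pH_pos (n : ℕ) : 1 ≤ pH n := by
  induction n with
  | zero => simp [pH_zero]
  | succ k ih => rw [pH_succ]; omega
lemma pell_eq (n : ℕ) : (pH n : ℤ)^2 = 2 * (pa n : ℤ)^2 + (-1)^(n+1) := by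
  induction n with
  | zero => norm_num [pa_zero, pH_zero]
  | succ k ih => push_cast [pa_succ, pH_succ] at *; ring_nf; ring_nf at ih; nlinarith [ih]
lemma sign_cases (n : ℕ) : ((-1:ℤ))^(n+1) = 1 ∨ ((-1:ℤ))^(n+1) = -1 := by
  rcases Nat.even_or_odd (n+1) with h | h
  · left; exact Even.neg_one_pow h
  · right; exact Odd.neg_one_pow h

lemma descentQ (b K σ A t D : ℤ) (hb : 1 ≤ b) (hK : 1 ≤ K) (hσ : σ = 1 ∨ σ = -1)
    (hpell : K^2 = 2*b^2 + σ) (hD0 : 0 ≤ D) (hD8 : D ≤ 8)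
    (h1 : 2*(b+K) < A) (h2 : A < 4*b + 3*K) (heq : t^2 = 2*A^2 - σ*D) :
    2*b < |t| - A ∧ |t| - A < 2*b + K ∧ (2*A - |t|)^2 - 2*(|t| - A)^2 = σ*D := by
  have hT2 : |t|^2 = 2*A^2 - σ*D := by rw [sq_abs]; exact heq
  have hT0 : 0 ≤ |t| := abs_nonneg t
  have hA0 : 0 < A := by linarith
  have hlow : A + 2*b < |t| := by
    rcases hσ with h | h <;> subst h <;>
      nlinarith [mul_le_mul_of_nonneg_left (by linarith : 2*K+1 ≤ A - 2*b) (by linarith : (0:ℤ) ≤ 2*K+1),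
        mul_nonneg (by linarith : (0:ℤ) ≤ A + 2*b + |t|) (by linarith : (0:ℤ) ≤ A + 2*b)]
  have hhigh : |t| < A + 2*b + K := by
    rcases hσ with h | h <;> subst h <;>
      nlinarith [mul_le_mul_of_nonneg_left (by linarith : A - 2*b - K ≤ 2*b + 2*K - 1) (by linarith : (0:ℤ) ≤ A + 2*b + K + |t|)]
  refine ⟨by linarith, by linarith, by ring_nf; ring_nf at hT2; linarith⟩

lemma descentR (b K σ A t : ℤ) (hb : 1 ≤ b) (hK : 1 ≤ K) (hσ : σ = 1 ∨ σ = -1)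
    (hpell : K^2 = 2*b^2 + σ)
    (h1 : b + K < A) (h2 : 3*A < 4*b + 3*K) (heq : t^2 = 2*A^2 - σ) :
    b < |t| - A ∧ 3*(|t| - A) < 2*b + K ∧ (2*A - |t|)^2 - 2*(|t| - A)^2 = σ := by
  have hT2 : |t|^2 = 2*A^2 - σ := by rw [sq_abs]; exact heq
  have hT0 : 0 ≤ |t| := abs_nonneg t
  have hA0 : 0 < A := by linarith
  have hlow : A + b < |t| := by
    rcases hσ with h | h <;> subst h <;>
      nlinarith [mul_le_mul_of_nonneg_left (by linarith : K+1 ≤ A - b) (by linarith : (0:ℤ) ≤ K+1),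
        mul_nonneg (by linarith : (0:ℤ) ≤ A + b + |t|) (by linarith : (0:ℤ) ≤ A + b)]
  have hhigh : 3*|t| < 3*A + 2*b + K := by
    rcases hσ with h | h <;> subst h <;>
      nlinarith [mul_le_mul_of_nonneg_left (by linarith : 3*A - 2*b - K ≤ 2*b + 2*K - 1) (by linarith : (0:ℤ) ≤ 3*A + 2*b + K + 3*|t|)]
  refine ⟨by linarith, by linarith, by ring_nf; ring_nf at hT2; linarith⟩

/-- No small-norm solutions in the window `(2aₙ, 2aₙ + Hₙ)`. -/
lemma Qlem : ∀ n : ℕ, ∀ A t D : ℤ, 0 ≤ D → D ≤ 8 →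
    2 * (pa n : ℤ) < A → A < 2 * pa n + pH n →
    t^2 - 2*A^2 ≠ (-1)^(n+1) * D := by
  intro n
  induction n with
  | zero => intro A t D _ _ h1 h2; simp [pa_zero, pH_zero] at h1 h2; omega
  | succ m ih =>
    match m, ih with
    | 0, _ =>
      intro A t D hD0 hD8 h1 h2 heq
      simp only [Nat.zero_add] at h1 h2
      have e1 : pa 1 = 2 := rfl
      have e2 : pH 1 = 3 := rfl
      rw [e1] at h1 h2
      rw [e2] at h2
      push_cast at h1 h2
      have hA : A = 5 ∨ A = 6 := by omega
      have hpow : ((-1:ℤ))^(0+1+1) = 1 := by norm_num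
      rw [hpow, one_mul] at heq
      have ht2 : t^2 ≤ 80 := by rcases hA with h | h <;> subst h <;> nlinarith
      have hl : -9 ≤ t := by nlinarith
      have hr : t ≤ 9 := by nlinarith
      interval_cases t <;> rcases hA with h | h <;> subst h <;> omega
    | k+1, ih =>
      intro A t D hD0 hD8 h1 h2 heq
      have hb : (1:ℤ) ≤ (pa (k+1) : ℤ) := by exact_mod_cast pa_pos (k+1)
      have hK : (1:ℤ) ≤ (pH (k+1) : ℤ) := by exact_mod_cast pH_pos (k+1)
      have hpell : ((pH (k+1) : ℤ))^2 = 2*((pa (k+1):ℤ))^2 + (-1)^(k+2) := pell_eq (k+1)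
      have hσ : ((-1:ℤ))^(k+2) = 1 ∨ ((-1:ℤ))^(k+2) = -1 := sign_cases (k+1)
      have e1 : (pa (k+2) : ℤ) = (pa (k+1) : ℤ) + (pH (k+1) : ℤ) := by
        rw [pa_succ]; push_cast; ring
      have e2 : (pH (k+2) : ℤ) = 2*(pa (k+1) : ℤ) + (pH (k+1) : ℤ) := by
        rw [pH_succ]; push_cast; ring
      rw [e1] at h1; rw [e1, e2] at h2
      have heq' : t^2 = 2*A^2 - ((-1:ℤ))^(k+2)*D := by
        have : ((-1:ℤ))^(k+1+1+1) = -((-1:ℤ))^(k+2) := by ring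
        rw [this] at heq; linarith
      obtain ⟨d1, d2, d3⟩ := descentQ _ _ _ A t D hb hK hσ hpell hD0 hD8
        (by linarith) (by linarith) heq'
      exact ih (|t| - A) (2*A - |t|) D hD0 hD8 d1 (by linarith) d3

/-- The only Pell solution with `aₙ < A` and `3A < 2aₙ + Hₙ` does not exist. -/
lemma Rlem : ∀ n : ℕ, ∀ A t : ℤ,
    (pa n : ℤ) < A → 3*A < 2 * pa n + pH n →
    t^2 - 2*A^2 ≠ (-1)^(n+1) := by
  intro n
  induction n with
  | zero => intro A t h1 h2; simp [pa_zero, pH_zero] at h1 h2; omega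
  | succ m ih =>
    match m, ih with
    | 0, _ =>
      intro A t h1 h2 _
      simp only [Nat.zero_add] at h1 h2
      have e1 : pa 1 = 2 := rfl
      have e2 : pH 1 = 3 := rfl
      rw [e1] at h1 h2
      rw [e2] at h2
      push_cast at h1 h2
      omega
    | k+1, ih =>
      intro A t h1 h2 heq
      have hb : (1:ℤ) ≤ (pa (k+1) : ℤ) := by exact_mod_cast pa_pos (k+1)
      have hK : (1:ℤ) ≤ (pH (k+1) : ℤ) := by exact_mod_cast pH_pos (k+1)
      have hpell : ((pH (k+1) : ℤ))^2 = 2*((pa (k+1):ℤ))^2 + (-1)^(k+2) := pell_eq (k+1)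
      have hσ : ((-1:ℤ))^(k+2) = 1 ∨ ((-1:ℤ))^(k+2) = -1 := sign_cases (k+1)
      have e1 : (pa (k+2) : ℤ) = (pa (k+1) : ℤ) + (pH (k+1) : ℤ) := by
        rw [pa_succ]; push_cast; ring
      have e2 : (pH (k+2) : ℤ) = 2*(pa (k+1) : ℤ) + (pH (k+1) : ℤ) := by
        rw [pH_succ]; push_cast; ring
      rw [e1] at h1; rw [e1, e2] at h2
      have heq' : t^2 = 2*A^2 - ((-1:ℤ))^(k+2) := by
        have : ((-1:ℤ))^(k+1+1+1) = -((-1:ℤ))^(k+2) := by ring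
        rw [this] at heq; linarith
      obtain ⟨d1, d2, d3⟩ := descentR _ _ _ A t hb hK hσ hpell
        (by linarith) (by linarith) heq'
      exact ih (|t| - A) (2*A - |t|) d1 (by linarith) d3


lemma zmod32_no : ∀ x y : ZMod 32, (x^2 - 2*y^2 ≠ 10 ∧ x^2 - 2*y^2 ≠ 11 ∧
    2*y^2 - x^2 ≠ 10 ∧ 2*y^2 - x^2 ≠ 11) := by decide

lemma int_no_10_11 (x y c : ℤ) (hc : c = 10 ∨ c = 11) :
    x^2 - 2*y^2 ≠ c ∧ 2*y^2 - x^2 ≠ c := by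
  constructor <;> intro h <;>
  · have h32 := congrArg (fun z : ℤ => (z : ZMod 32)) h
    push_cast at h32
    rcases hc with rfl | rfl
    · first
      | exact (zmod32_no (x : ZMod 32) (y : ZMod 32)).1 (by simpa using h32)
      | exact (zmod32_no (x : ZMod 32) (y : ZMod 32)).2.2.1 (by simpa using h32)
    · first
      | exact (zmod32_no (x : ZMod 32) (y : ZMod 32)).2.1 (by simpa using h32)
      | exact (zmod32_no (x : ZMod 32) (y : ZMod 32)).2.2.2 (by simpa using h32)

lemma zmod3_no : ∀ x y : ZMod 3, x^2 - 2*y^2 = 0 → x = 0 ∧ y = 0 := by decide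

lemma int_div3 (x y e : ℤ) (h : x^2 - 2*y^2 = 9*e) : 3 ∣ x ∧ 3 ∣ y := by
  have h3 : ((x : ZMod 3))^2 - 2*(y : ZMod 3)^2 = 0 := by
    have hc := congrArg (fun z : ℤ => (z : ZMod 3)) h
    push_cast at hc
    rw [hc, show (9 : ZMod 3) = 0 by decide, zero_mul]
  obtain ⟨hx, hy⟩ := zmod3_no _ _ h3
  exact ⟨by exact_mod_cast (ZMod.intCast_zmod_eq_zero_iff_dvd x 3).mp hx,
         by exact_mod_cast (ZMod.intCast_zmod_eq_zero_iff_dvd y 3).mp hy⟩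

lemma pa_ge2 (n : ℕ) (hn : 1 ≤ n) : 2 ≤ pa n := by
  cases n with
  | zero => omega
  | succ k => rw [pa_succ]; have := pa_pos k; have := pH_pos k; omega

lemma pa_le_pH (n : ℕ) : pa n ≤ pH n := by
  induction n with
  | zero => simp [pa_zero, pH_zero]
  | succ k ih => rw [pa_succ, pH_succ]; have := pa_pos k; omega

lemma pH_le_two_pa (n : ℕ) : pH n ≤ 2 * pa n := by
  induction n with
  | zero => simp [pa_zero, pH_zero]
  | succ k ih => rw [pa_succ, pH_succ]; have := pH_pos k; omega

lemma sq_lt_sq'' {x y : ℤ} (hx : 0 ≤ x) (hy : 0 ≤ y) (h : x^2 < y^2) : x < y := by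
  by_contra hc; push_neg at hc; nlinarith [mul_le_mul hc hc hy hx]

lemma sq_le_sq'' {x y : ℤ} (hx : 0 ≤ x) (hy : 0 ≤ y) (h : x^2 ≤ y^2) : x ≤ y := by
  by_contra hc; push_neg at hc; nlinarith [mul_le_mul hc.le hc.le hy hx]

set_option maxHeartbeats 1600000 in
lemma key_int (n : ℕ) (hn : 1 ≤ n) (A u : ℤ)
    (h1 : 2*(pa n : ℤ) < A) (h2 : A < 2*(pa n : ℤ) + (pH n : ℤ))
    (hu0 : 0 ≤ u) (hu1 : u^2 ≤ 2*A^2) (hu2 : 2*A^2 < (u+1)^2) :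
    (u + 4*(pa n : ℤ))^2 ≤ 2*(A + 2*(pH n : ℤ))^2 ∧
      2*(A + 2*(pH n : ℤ))^2 < (u + 4*(pa n : ℤ) + 1)^2 := by
  have ha1 : (1:ℤ) ≤ (pa n : ℤ) := by exact_mod_cast pa_pos n
  have ha2 : (2:ℤ) ≤ (pa n : ℤ) := by exact_mod_cast pa_ge2 n hn
  have hH1 : (1:ℤ) ≤ (pH n : ℤ) := by exact_mod_cast pH_pos n
  generalize hadef : (pa n : ℤ) = a at *
  generalize hHdef : (pH n : ℤ) = H at *
  have hA0 : 0 < A := by linarith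
  rcases sign_cases n with hs | hs
  · -- s = +1 : H² = 2a² + 1
    have hpell : H^2 = 2*a^2 + 1 := by have := pell_eq n; rw [hs, hadef, hHdef] at this; exact this
    have hH3 : 2*H ≤ 3*a := by nlinarith
    have hA12 : A^2 < 12*a^2 := by nlinarith
    constructor
    · -- C1 easy
      have hau : a*u < H*A := by
        apply sq_lt_sq'' (by positivity) (by positivity)
        nlinarith [sq_nonneg u, mul_pos hA0 hA0]
      nlinarith
    · -- C2
      have hh1 : (1:ℤ) ≤ (u+1)^2 - 2*A^2 := by linarith
      have hmain : 8*H*A + 9 ≤ 8*a*u + 8*a + ((u+1)^2 - 2*A^2) := by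
        by_cases hA2 : A^2 < a^2*((u+1)^2 - 2*A^2)
        · have hau : H*A < a*(u+1) := by
            apply sq_lt_sq'' (by positivity) (by positivity)
            nlinarith
          nlinarith [hh1]
        · push_neg at hA2
          have hh11 : (u+1)^2 - 2*A^2 ≤ 11 := by nlinarith
          by_cases hh8 : (u+1)^2 - 2*A^2 ≤ 8
          · exfalso
            refine Qlem n A (u+1) ((u+1)^2 - 2*A^2) (by linarith) hh8 ?_ ?_ (by rw [hs]; ring)
            · rw [hadef]; exact h1
            · rw [hadef, hHdef]; exact h2
          · push_neg at hh8
            have h91011 : (u+1)^2 - 2*A^2 = 9 ∨ ((u+1)^2 - 2*A^2 = 10 ∨ (u+1)^2 - 2*A^2 = 11) := by omega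
            rcases h91011 with h9 | hc
            · obtain ⟨hdu, hdA⟩ := int_div3 (u+1) A 1 (by linarith)
              obtain ⟨u1, hu1e⟩ := hdu
              obtain ⟨A1, hA1e⟩ := hdA
              have hu1pos : 0 ≤ u1 := by omega
              have heq1 : u1^2 - 2*A1^2 = 1 := by
                rw [hu1e, hA1e] at h9; linarith [h9]
              have hA1a : A1 ≤ a := by
                by_contra hcc
                push_neg at hcc
                refine Rlem n A1 u1 ?_ ?_ (by rw [hs]; exact heq1)
                · rw [hadef]; exact hcc
                · rw [hadef, hHdef, ← hA1e]; linarith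
              have haA1 : a ≤ A1 := by
                apply sq_le_sq'' (by linarith) (by linarith)
                rw [h9, hA1e] at hA2; nlinarith [hA2]
              have hA1eq : A1 = a := le_antisymm hA1a haA1
              have hu1H : u1 = H := by
                have hsq : u1^2 = H^2 := by rw [hpell, ← hA1eq]; linarith
                exact le_antisymm (sq_le_sq'' hu1pos (by linarith) (by linarith))
                  (sq_le_sq'' (by linarith) hu1pos (by linarith))
              have hAa : A = 3*a := by rw [hA1e, hA1eq]
              have huu : u = 3*H - 1 := by omega
              rw [hAa, huu]
              nlinarith [hpell]
            · exfalso
              exact (int_no_10_11 (u+1) A ((u+1)^2 - 2*A^2) hc).1 rfl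
      nlinarith
  · -- s = -1 : H² = 2a² - 1
    have hpell : H^2 = 2*a^2 - 1 := by
      have := pell_eq n; rw [hs, hadef, hHdef] at this; linarith
    have hH3 : 2*H ≤ 3*a := by
      have : (2*H)^2 < (3*a)^2 := by nlinarith
      have := sq_lt_sq'' (by linarith : (0:ℤ) ≤ 2*H) (by linarith : (0:ℤ) ≤ 3*a) this
      linarith
    have hA12 : A^2 < 12*a^2 := by nlinarith
    have hg0 : (0:ℤ) ≤ 2*A^2 - u^2 := by linarith
    constructor
    · -- C1 : need 8au + 8 ≤ g + 8HA
      have hmain : 8*a*u + 8 ≤ (2*A^2 - u^2) + 8*H*A := by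
        by_cases hA2 : A^2 < a^2*(2*A^2 - u^2)
        · have hau : a*u < H*A := by
            apply sq_lt_sq'' (by positivity) (by positivity)
            nlinarith
          nlinarith [hg0]
        · push_neg at hA2
          have hg11 : 2*A^2 - u^2 ≤ 11 := by nlinarith
          by_cases hg8 : 2*A^2 - u^2 ≤ 8
          · exfalso
            refine Qlem n A u (2*A^2 - u^2) hg0 hg8 ?_ ?_ (by rw [hs]; ring)
            · rw [hadef]; exact h1
            · rw [hadef, hHdef]; exact h2
          · push_neg at hg8
            have h91011 : 2*A^2 - u^2 = 9 ∨ (2*A^2 - u^2 = 10 ∨ 2*A^2 - u^2 = 11) := by omega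
            rcases h91011 with h9 | hc
            · obtain ⟨hdu, hdA⟩ := int_div3 u A (-1) (by linarith)
              obtain ⟨u1, hu1e⟩ := hdu
              obtain ⟨A1, hA1e⟩ := hdA
              have hu1pos : 0 ≤ u1 := by omega
              have heq1 : u1^2 - 2*A1^2 = -1 := by
                rw [hu1e, hA1e] at h9; linarith [h9]
              have hA1a : A1 ≤ a := by
                by_contra hcc
                push_neg at hcc
                refine Rlem n A1 u1 ?_ ?_ (by rw [hs]; linarith [heq1])
                · rw [hadef]; exact hcc
                · rw [hadef, hHdef, ← hA1e]; linarith
              have haA1 : a ≤ A1 := by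
                apply sq_le_sq'' (by linarith) (by linarith)
                rw [h9, hA1e] at hA2; nlinarith [hA2]
              have hA1eq : A1 = a := le_antisymm hA1a haA1
              have hu1H : u1 = H := by
                have hsq : u1^2 = H^2 := by rw [hpell, ← hA1eq]; linarith
                exact le_antisymm (sq_le_sq'' hu1pos (by linarith) (by linarith))
                  (sq_le_sq'' (by linarith) hu1pos (by linarith))
              have hAa : A = 3*a := by rw [hA1e, hA1eq]
              have huu : u = 3*H := by omega
              rw [hAa, huu]
              nlinarith [hpell]
            · exfalso
              exact (int_no_10_11 u A (2*A^2 - u^2) hc).2 rfl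
      nlinarith
    · -- C2 easy
      have hgu : 2*A^2 - u^2 ≤ 2*u := by nlinarith
      have hau : H*A < a*(u+1) := by
        apply sq_lt_sq'' (by positivity) (by positivity)
        nlinarith [mul_pos hA0 hA0]
      nlinarith



noncomputable def Tf (m : ℕ) : ℤ := ⌊Real.sqrt 2 * (m : ℝ)⌋

lemma sqrt2_sq : Real.sqrt 2 ^ 2 = 2 := Real.sq_sqrt (by norm_num)
lemma sqrt2_lt : 1 < Real.sqrt 2 ∧ Real.sqrt 2 < 2 := by
  constructor <;> nlinarith [sqrt2_sq, Real.sqrt_nonneg 2]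

/-- Characterization of `⌊√2 x⌋`. -/
lemma floor_sqrt2_eq (x : ℕ) (u : ℤ) (hu : 0 ≤ u)
    (h1 : u^2 ≤ 2*(x:ℤ)^2) (h2 : 2*(x:ℤ)^2 < (u+1)^2) : Tf x = u := by
  have hs0 : (0:ℝ) ≤ Real.sqrt 2 := Real.sqrt_nonneg 2
  have hx0 : (0:ℝ) ≤ (x:ℝ) := Nat.cast_nonneg x
  rw [Tf, Int.floor_eq_iff]
  constructor
  · -- u ≤ √2 x
    have h1' : ((u:ℝ))^2 ≤ (Real.sqrt 2 * x)^2 := by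
      have : ((u:ℝ))^2 ≤ 2*(x:ℝ)^2 := by exact_mod_cast h1
      calc ((u:ℝ))^2 ≤ 2*(x:ℝ)^2 := this
        _ = (Real.sqrt 2 * x)^2 := by rw [mul_pow, sqrt2_sq]
    nlinarith [mul_nonneg hs0 hx0, (by exact_mod_cast hu : (0:ℝ) ≤ (u:ℝ))]
  · -- √2 x < u + 1
    have h2' : (Real.sqrt 2 * x)^2 < ((u:ℝ)+1)^2 := by
      have : 2*(x:ℝ)^2 < ((u:ℝ)+1)^2 := by exact_mod_cast h2
      calc (Real.sqrt 2 * x)^2 = 2*(x:ℝ)^2 := by rw [mul_pow, sqrt2_sq]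
        _ < ((u:ℝ)+1)^2 := this
    nlinarith [mul_nonneg hs0 hx0, (by exact_mod_cast hu : (0:ℝ) ≤ (u:ℝ))]

lemma Tf_bounds (x : ℕ) : 0 ≤ Tf x ∧ (Tf x)^2 ≤ 2*(x:ℤ)^2 ∧ 2*(x:ℤ)^2 < (Tf x + 1)^2 := by
  have hs0 : (0:ℝ) ≤ Real.sqrt 2 := Real.sqrt_nonneg 2
  have hx0 : (0:ℝ) ≤ (x:ℝ) := Nat.cast_nonneg x
  have h0 : 0 ≤ Tf x := Int.floor_nonneg.mpr (by positivity)
  have hfl : (Tf x : ℝ) ≤ Real.sqrt 2 * x := Int.floor_le _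
  have hfu : Real.sqrt 2 * x < Tf x + 1 := Int.lt_floor_add_one _
  refine ⟨h0, ?_, ?_⟩
  · have : ((Tf x : ℤ):ℝ)^2 ≤ (Real.sqrt 2 * x)^2 := by
      have h0' : (0:ℝ) ≤ (Tf x : ℝ) := by exact_mod_cast h0
      nlinarith
    rw [mul_pow, sqrt2_sq] at this
    exact_mod_cast this
  · have : (Real.sqrt 2 * x)^2 < ((Tf x : ℝ)+1)^2 := by
      nlinarith [mul_nonneg hs0 hx0]
    rw [mul_pow, sqrt2_sq] at this
    exact_mod_cast this

lemma calpha_Tf (m : ℕ) : calpha m = Tf (m+1) - Tf m - 1 := by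
  have e : ∀ k : ℕ, ⌊(Real.sqrt 2 - 1) * (k : ℝ)⌋ = Tf k - k := by
    intro k
    rw [Tf, show (Real.sqrt 2 - 1) * (k:ℝ) = Real.sqrt 2 * k - (k:ℤ) by push_cast; ring,
      Int.floor_sub_intCast]
  rw [calpha, show ((m:ℝ)+1) = ((m+1 : ℕ):ℝ) by push_cast; ring, e (m+1), e m]
  push_cast
  ring

lemma calpha_mem (m : ℕ) : calpha m = 0 ∨ calpha m = 1 := by
  have h1 := sqrt2_lt.1
  have h2 := sqrt2_lt.2
  have hfl : (Tf m : ℝ) ≤ Real.sqrt 2 * (m:ℝ) := Int.floor_le _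
  have hlow : Tf m + 1 ≤ Tf (m+1) := by
    have hle : ((Tf m + 1 : ℤ) : ℝ) ≤ Real.sqrt 2 * ((m+1 : ℕ):ℝ) := by
      push_cast
      nlinarith
    exact Int.le_floor.mpr hle
  have hupp : Tf (m+1) ≤ Tf m + 2 := by
    have h2' : Real.sqrt 2 * ((m+1 : ℕ):ℝ) ≤ Real.sqrt 2 * (m:ℝ) + ((2:ℤ):ℝ) := by
      push_cast
      nlinarith
    calc Tf (m+1) ≤ ⌊Real.sqrt 2 * (m:ℝ) + ((2:ℤ):ℝ)⌋ := Int.floor_le_floor h2'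
      _ = Tf m + 2 := Int.floor_add_intCast _ _
  rw [calpha_Tf]
  omega



lemma count_succ (m : ℕ) :
    zcount (m+1) = zcount m + (if calpha (m+1) = 0 then 1 else 0) ∧
    ocount (m+1) = ocount m + (if calpha (m+1) = 1 then 1 else 0) := by
  have hicc : Finset.Icc 1 (m+1) = insert (m+1) (Finset.Icc 1 m) := by
    ext x
    simp only [Finset.mem_Icc, Finset.mem_insert]
    omega
  have hnot : (m+1) ∉ Finset.Icc 1 m := by simp
  constructor
  · rw [zcount, zcount, hicc, Finset.filter_insert]
    by_cases hca : calpha (m+1) = 0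
    · rw [if_pos hca, Finset.card_insert_of_notMem (fun hc => hnot (Finset.mem_filter.mp hc).1),
        if_pos hca]
    · rw [if_neg hca, if_neg hca]; omega
  · rw [ocount, ocount, hicc, Finset.filter_insert]
    by_cases hca : calpha (m+1) = 1
    · rw [if_pos hca, Finset.card_insert_of_notMem (fun hc => hnot (Finset.mem_filter.mp hc).1),
        if_pos hca]
    · rw [if_neg hca, if_neg hca]; omega

lemma Tf_one : Tf 1 = 1 := by
  have h1 := sqrt2_lt.1
  have h2 := sqrt2_lt.2
  rw [Tf, Int.floor_eq_iff]
  push_cast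
  constructor <;> nlinarith

lemma counts_eq (m : ℕ) : (ocount m : ℤ) = Tf (m+1) - (m+1) ∧ zcount m + ocount m = m := by
  induction m with
  | zero =>
    constructor
    · simp [ocount, Tf_one]
    · simp [ocount, zcount]
  | succ k ih =>
    obtain ⟨ih1, ih2⟩ := ih
    obtain ⟨hz, ho⟩ := count_succ k
    have hc := calpha_Tf (k+1)
    rcases calpha_mem (k+1) with h | h
    · rw [h] at hc
      constructor
      · rw [ho, h]
        push_cast
        omega
      · rw [hz, ho, h]
        norm_num
        omega
    · rw [h] at hc
      constructor
      · rw [ho, h]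
        push_cast
        omega
      · rw [hz, ho, h]
        norm_num
        omega

lemma zcount_pos (m : ℕ) (hm : 1 ≤ m) (h : calpha m = 0) : 1 ≤ zcount m := by
  rw [show (1 ≤ zcount m) = (0 < zcount m) from rfl, zcount, Finset.card_pos]
  exact ⟨m, Finset.mem_filter.mpr ⟨Finset.mem_Icc.mpr ⟨hm, le_refl m⟩, h⟩⟩

lemma ocount_pos (m : ℕ) (hm : 1 ≤ m) (h : calpha m = 1) : 1 ≤ ocount m := by
  rw [show (1 ≤ ocount m) = (0 < ocount m) from rfl, ocount, Finset.card_pos]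
  exact ⟨m, Finset.mem_filter.mpr ⟨Finset.mem_Icc.mpr ⟨hm, le_refl m⟩, h⟩⟩


lemma pH_strict (n : ℕ) : pH n < pH (n+1) := by
  rw [pH_succ]; have := pa_pos n; omega

lemma pH_ge7 (n : ℕ) (hn : 2 ≤ n) : 7 ≤ pH n := by
  induction n with
  | zero => omega
  | succ k ih =>
    rcases Nat.lt_or_ge k 2 with hk | hk
    · interval_cases k
      · omega
      · have : pH (1+1) = 7 := rfl
        omega
    · have := pH_strict k
      have := ih (by omega)
      omega

/-- The key floor shift identity. -/
lemma key_shift (n : ℕ) (hn : 1 ≤ n) (A : ℕ)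
    (h1 : 2*pa n + 1 ≤ A) (h2 : A ≤ 2*pa n + pH n - 1) :
    Tf (A + 2*pH n) = Tf A + 4*(pa n : ℤ) := by
  obtain ⟨hu0, hu1, hu2⟩ := Tf_bounds A
  have hH1 := pH_pos n
  have hi1 : 2*(pa n : ℤ) < (A : ℤ) := by exact_mod_cast (by omega : 2*pa n < A)
  have hi2 : (A : ℤ) < 2*(pa n : ℤ) + (pH n : ℤ) := by
    exact_mod_cast (by omega : A < 2*pa n + pH n)
  obtain ⟨c1, c2⟩ := key_int n hn (A : ℤ) (Tf A) hi1 hi2 hu0 hu1 hu2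
  apply floor_sqrt2_eq (A + 2*pH n) (Tf A + 4*(pa n:ℤ)) (by positivity)
  · push_cast
    linarith
  · push_cast
    linarith

/-- Membership of `2 Hₙ` in the set of good periods. -/
lemma level_mem (n : ℕ) (hn : 2 ≤ n) :
    10 < 2*pH n ∧ ∃ i N : ℕ, 2*pH n < N ∧ 3*(2*pH n) ≤ 2*N + 4 ∧
      ∀ j, j + 2*pH n < N → x5 (i + j) = x5 (i + j + 2*pH n) := by
  have h7 := pH_ge7 n hn
  have ha1 := pa_pos n
  have haH := pa_le_pH n
  have hH2a := pH_le_two_pa n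
  refine ⟨by omega, 2*pa n, 3*pH n - 2, by omega, by omega, ?_⟩
  intro j hj
  have hjH : j + 3 ≤ pH n := by omega
  set m : ℕ := 2*pa n + j + 1 with hm
  have hw1 : 2*pa n + 1 ≤ m := by omega
  have hw2 : m ≤ 2*pa n + pH n - 2 := by omega
  have hT1 : Tf (m + 2*pH n) = Tf m + 4*(pa n : ℤ) :=
    key_shift n (by omega) m (by omega) (by omega)
  have hT2 : Tf (m + 1 + 2*pH n) = Tf (m+1) + 4*(pa n : ℤ) :=
    key_shift n (by omega) (m+1) (by omega) (by omega)
  have hca : calpha (m + 2*pH n) = calpha m := by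
    rw [calpha_Tf, calpha_Tf, show m + 2*pH n + 1 = m + 1 + 2*pH n by omega, hT1, hT2]
    ring
  -- count identities
  have hoc := (counts_eq m).1
  have hoc' := (counts_eq (m + 2*pH n)).1
  have hzc := (counts_eq m).2
  have hzc' := (counts_eq (m + 2*pH n)).2
  have hocn : ocount (m + 2*pH n) + 2*pH n = ocount m + 4*pa n := by
    rw [show m + 2*pH n + 1 = m + 1 + 2*pH n by omega, hT2] at hoc'
    push_cast at hoc hoc'
    omega
  have hzcn : zcount (m + 2*pH n) + 4*pa n = zcount m + 4*pH n := by
    omega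
  -- indices
  have hidx1 : 2*pa n + j + 1 = m := by omega
  have hidx2 : 2*pa n + j + 2*pH n + 1 = m + 2*pH n := by omega
  rw [x5, x5, hidx1, hidx2, hca]
  rcases calpha_mem m with h0 | h1
  · rw [h0, if_pos rfl, if_pos rfl]
    have hz1 : 1 ≤ zcount m := zcount_pos m (by omega) h0
    have : (zcount (m + 2*pH n) - 1) % 4 = (zcount m - 1) % 4 := by omega
    rw [this]
  · have hne : calpha m ≠ 0 := by rw [h1]; norm_num
    rw [if_neg hne, if_neg hne]
    have ho1 : 1 ≤ ocount m := ocount_pos m (by omega) h1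
    have : (ocount (m + 2*pH n) - 1) % 2 = (ocount m - 1) % 2 := by omega
    rw [this]

/-- `x₅` contains "almost `3/2`-powers" with arbitrarily large periods: the set of
periods `p > 10` for which some factor of `x₅` of length `n > p` has period `p` and
`2n + 4 ≥ 3p` is infinite. -/
theorem x5_almost_three_halves_powers :
    {p : ℕ | 10 < p ∧ ∃ i n : ℕ, p < n ∧ 3 * p ≤ 2 * n + 4 ∧
      ∀ j, j + p < n → x5 (i + j) = x5 (i + j + p)}.Infinite := by
  apply Set.infinite_of_injective_forall_mem (f := fun k : ℕ => 2 * pH (k+2))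
  · have hsm : StrictMono (fun k : ℕ => 2 * pH (k+2)) := by
      apply strictMono_nat_of_lt_succ
      intro k
      have := pH_strict (k+2)
      have e : k+1+2 = k+2+1 := by ring
      simp only [e]
      omega
    exact hsm.injective
  · intro k
    obtain ⟨h10, i, N, hN1, hN2, hper⟩ := level_mem (k+2) (by omega)
    exact ⟨h10, i, N, hN1, hN2, hper⟩
end
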